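/- If g is a Lie algebra in which the iterated bracket identity [[x1,x2], [[...[[x3,x4],x5],...],x_{k+1}]] = 0 holds for all elements (i.e., [g', N_{k-2}] = 0 where g' is the derived subalgebra and N_{k-2} denotes (k-2)-fold left-normed brackets), and k ≥ 3, then g is solvable; more precisely, g^{(⌈log₂(k-1)⌉+1)} = 0. -/

import Mathlib

/-- `leftNormed j x` is the left-normed bracket `N_j(x_0, …, x_j)`:
`N_1(x_0,x_1) = ⁅x_0,x_1⁆` and `N_{j+1}(x_0,…,x_{j+1}) = ⁅N_j(x_0,…,x_j), x_{j+1}⁆`. -/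
def leftNormed {L : Type*} [LieRing L] : ℕ → (ℕ → L) → L
  | 0, x => x 0
  | j + 1, x => ⁅leftNormed j x, x (j + 1)⁆

section Aux

variable {L : Type*} [LieRing L] [LieAlgebra ℝ L]

omit [LieAlgebra ℝ L] in
lemma leftNormed_congr : ∀ (n : ℕ) (x y : ℕ → L), (∀ i ≤ n, x i = y i) →
    leftNormed n x = leftNormed n y
  | 0, x, y, h => h 0 (le_refl 0)
  | n + 1, x, y, h => by
    simp only [leftNormed]
    rw [leftNormed_congr n x y (fun i hi => h i (hi.trans (Nat.le_succ n))), h (n+1) le_rfl]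

omit [LieAlgebra ℝ L] in
/-- A left-normed bracket of length `a + b + 1` is a left-normed bracket of length `b + 1`
whose first entry is a left-normed bracket of length `a + 1`. -/
lemma leftNormed_add (a : ℕ) (x : ℕ → L) : ∀ b : ℕ,
    leftNormed (a + b) x = leftNormed b (fun i => if i = 0 then leftNormed a x else x (a + i))
  | 0 => rfl
  | b + 1 => by
    show ⁅leftNormed (a + b) x, x (a + b + 1)⁆ = ⁅_, _⁆
    rw [leftNormed_add a x b]
    simp [Nat.add_assoc]

/-- Span of left-normed brackets of length `n+1`. -/
def lnSpan (L : Type*) [LieRing L] [LieAlgebra ℝ L] (n : ℕ) : Submodule ℝ L :=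
  Submodule.span ℝ (Set.range (leftNormed n))

lemma mem_lnSpan_of_leftNormed (n : ℕ) (x : ℕ → L) : leftNormed n x ∈ lnSpan L n :=
  Submodule.subset_span ⟨x, rfl⟩

lemma lnSpan_zero_eq_top : lnSpan L 0 = ⊤ := by
  rw [eq_top_iff]
  intro z _
  exact Submodule.subset_span ⟨fun _ => z, rfl⟩

lemma lie_mem_lnSpan_succ (a : ℕ) {u : L} (hu : u ∈ lnSpan L a) (v : L) :
    ⁅u, v⁆ ∈ lnSpan L (a + 1) := by
  induction hu using Submodule.span_induction with
  | mem w hw =>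
    obtain ⟨x, rfl⟩ := hw
    set f : ℕ → L := fun i => if i = a + 1 then v else x i with hf
    have key : leftNormed (a + 1) f = ⁅leftNormed a x, v⁆ := by
      show ⁅leftNormed a f, f (a + 1)⁆ = ⁅leftNormed a x, v⁆
      have h1 : leftNormed a f = leftNormed a x :=
        leftNormed_congr a f x (fun i hi => by
          simp [hf, Nat.ne_of_lt (Nat.lt_succ_of_le hi)])
      have h2 : f (a + 1) = v := by simp [hf]
      rw [h1, h2]
    rw [← key]
    exact mem_lnSpan_of_leftNormed _ _
  | zero => simp
  | add _ _ _ _ h1 h2 => rw [add_lie]; exact add_mem h1 h2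
  | smul t _ _ h => rw [smul_lie]; exact Submodule.smul_mem _ t h

lemma lnSpan_lie : ∀ (b a : ℕ) (u : L), u ∈ lnSpan L a → ∀ v ∈ lnSpan L b,
    ⁅u, v⁆ ∈ lnSpan L (a + b + 1) := by
  intro b
  induction b with
  | zero =>
    intro a u hu v _
    exact lie_mem_lnSpan_succ a hu v
  | succ b ih =>
    intro a u hu v hv
    induction hv using Submodule.span_induction with
    | mem w hw =>
      obtain ⟨x, rfl⟩ := hw
      show ⁅u, ⁅leftNormed b x, x (b+1)⁆⁆ ∈ _
      rw [leibniz_lie]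
      apply add_mem
      · have h1 : ⁅u, leftNormed b x⁆ ∈ lnSpan L (a + b + 1) :=
          ih a u hu _ (mem_lnSpan_of_leftNormed b x)
        exact lie_mem_lnSpan_succ (a + b + 1) h1 (x (b+1))
      · have h1 : ⁅u, x (b+1)⁆ ∈ lnSpan L (a + 1) := by
          apply lie_mem_lnSpan_succ a hu
        have h2 : ⁅⁅u, x (b+1)⁆, leftNormed b x⁆ ∈ lnSpan L (a + 1 + b + 1) :=
          ih (a + 1) _ h1 _ (mem_lnSpan_of_leftNormed b x)
        have h3 : ⁅leftNormed b x, ⁅u, x (b+1)⁆⁆ = -⁅⁅u, x (b+1)⁆, leftNormed b x⁆ := by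
          rw [lie_skew]
        rw [h3, show a + (b + 1) + 1 = a + 1 + b + 1 by omega]
        exact neg_mem h2
    | zero => simp
    | add _ _ _ _ h1 h2 => rw [lie_add]; exact add_mem h1 h2
    | smul t _ _ h => rw [lie_smul]; exact Submodule.smul_mem _ t h

lemma derivedSeries_le_lnSpan : ∀ (n : ℕ) (z : L),
    z ∈ LieAlgebra.derivedSeries ℝ L n → z ∈ lnSpan L (2 ^ n - 1) := by
  intro n
  induction n with
  | zero =>
    intro z _
    rw [pow_zero]
    simp [lnSpan_zero_eq_top]
  | succ n ih =>
    intro z hz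
    rw [LieAlgebra.derivedSeries_def, LieAlgebra.derivedSeriesOfIdeal_succ,
      ← LieSubmodule.mem_toSubmodule, LieSubmodule.lieIdeal_oper_eq_linear_span'] at hz
    induction hz using Submodule.span_induction with
    | mem w hw =>
      obtain ⟨x, hx, y, hy, rfl⟩ := hw
      have hx' : x ∈ lnSpan L (2 ^ n - 1) := ih x hx
      have hy' : y ∈ lnSpan L (2 ^ n - 1) := ih y hy
      have h := lnSpan_lie (2 ^ n - 1) (2 ^ n - 1) x hx' y hy'
      have e : 2 ^ n - 1 + (2 ^ n - 1) + 1 = 2 ^ (n + 1) - 1 := by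
        have : 1 ≤ 2 ^ n := Nat.one_le_two_pow
        rw [pow_succ]
        omega
      rwa [e] at h
    | zero => simp
    | add _ _ _ _ h1 h2 => exact add_mem h1 h2
    | smul t _ _ h => exact Submodule.smul_mem _ t h

end Aux

/-- If `g` is a finite-dimensional real Lie algebra in which the identity
`SN_k(x_1,…,x_{k+1}) = ⁅⁅x_1,x_2⁆, N_{k-2}(x_3,…,x_{k+1})⁆ = 0` holds for all elements,
with `k ≥ 3`, then `g` is solvable; more precisely `g^(⌈log₂(k-1)⌉ + 1) = 0`. -/
theorem solvable_of_SN_eq_zero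
    (L : Type*) [LieRing L] [LieAlgebra ℝ L] [FiniteDimensional ℝ L]
    (k : ℕ) (hk : 3 ≤ k)
    (hSN : ∀ x : ℕ → L, ⁅⁅x 0, x 1⁆, leftNormed (k - 2) (fun i => x (i + 2))⁆ = 0) :
    LieAlgebra.IsSolvable L ∧
      LieAlgebra.derivedSeries ℝ L (Nat.clog 2 (k - 1) + 1) = ⊥ := by
  set m := Nat.clog 2 (k - 1) with hm
  -- restate the hypothesis for arbitrary entries
  have hSN' : ∀ (p q : L) (w : ℕ → L), ⁅⁅p, q⁆, leftNormed (k - 2) w⁆ = 0 := by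
    intro p q w
    set X : ℕ → L := fun i => if i = 0 then p else if i = 1 then q else w (i - 2) with hX
    have h := hSN X
    have e0 : X 0 = p := rfl
    have e1 : X 1 = q := rfl
    have e2 : (fun i => X (i + 2)) = w := by
      funext i
      simp [hX]
    rw [e0, e1, e2] at h
    exact h
  -- any left-normed bracket of length `≥ k - 1` is killed by brackets
  have hkill : ∀ (j : ℕ), k - 2 ≤ j → ∀ (p q : L), ∀ v ∈ lnSpan L j, ⁅⁅p, q⁆, v⁆ = 0 := by
    intro j hj p q v hv
    induction hv using Submodule.span_induction with
    | mem w hw =>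
      obtain ⟨x, rfl⟩ := hw
      obtain ⟨d, rfl⟩ : ∃ d, j = d + (k - 2) := ⟨j - (k - 2), by omega⟩
      rw [leftNormed_add d x (k - 2)]
      exact hSN' p q _
    | zero => simp
    | add _ _ _ _ h1 h2 => rw [lie_add, h1, h2, add_zero]
    | smul t _ _ h => rw [lie_smul, h, smul_zero]
  -- elements of `lnSpan (c+1)` kill all high left-normed spans
  have hkill2 : ∀ (c : ℕ) (u : L), u ∈ lnSpan L (c + 1) →
      ∀ (j : ℕ), k - 2 ≤ j → ∀ v ∈ lnSpan L j, ⁅u, v⁆ = 0 := by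
    intro c u hu j hj v hv
    induction hu using Submodule.span_induction with
    | mem w hw =>
      obtain ⟨x, rfl⟩ := hw
      exact hkill j hj _ _ v hv
    | zero => simp
    | add _ _ _ _ h1 h2 => rw [add_lie, h1, h2, add_zero]
    | smul t _ _ h => rw [smul_lie, h, smul_zero]
  -- index bookkeeping
  have hk1 : 2 ≤ k - 1 := by omega
  have hpow : k - 1 ≤ 2 ^ m := Nat.le_pow_clog one_lt_two _
  have hm1 : 1 ≤ m := by
    rcases Nat.eq_zero_or_pos m with h0 | h0
    · exfalso; rw [h0, pow_zero] at hpow; omega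
    · exact h0
  have hidx : k - 2 ≤ 2 ^ m - 1 := by omega
  have hc : ∃ c, 2 ^ m - 1 = c + 1 := ⟨2 ^ m - 2, by
    have h2 : 2 ≤ 2 ^ m := by omega
    omega⟩
  obtain ⟨c, hc⟩ := hc
  -- the key vanishing
  have main : LieAlgebra.derivedSeries ℝ L (m + 1) = ⊥ := by
    rw [LieSubmodule.eq_bot_iff]
    intro z hz
    rw [LieAlgebra.derivedSeries_def, LieAlgebra.derivedSeriesOfIdeal_succ,
      ← LieSubmodule.mem_toSubmodule, LieSubmodule.lieIdeal_oper_eq_linear_span'] at hz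
    induction hz using Submodule.span_induction with
    | mem w hw =>
      obtain ⟨x, hx, y, hy, rfl⟩ := hw
      have hx' : x ∈ lnSpan L (c + 1) := hc ▸ derivedSeries_le_lnSpan m x hx
      have hy' : y ∈ lnSpan L (2 ^ m - 1) := derivedSeries_le_lnSpan m y hy
      exact hkill2 c x hx' (2 ^ m - 1) hidx y hy'
    | zero => rfl
    | add _ _ _ _ h1 h2 => rw [h1, h2, add_zero]
    | smul t _ _ h => rw [h, smul_zero]
  refine ⟨(LieAlgebra.isSolvable_iff ℝ L).mpr ⟨m + 1, main⟩, main⟩
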